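/- Let λ ∈ 𝕋^ω and r = (r_1, r_2, ...) a sequence of positive reals with r_1 ≤ 1. Then the family {(rλ)^n : n ∈ ℤ^∞, τ(n) ≥ 0} is bounded (where (rλ)^n = ∏_k (r_k λ_k)^{n_k}) if and only if log r_k / log p_k = log r_1 / log 2 for all k, i.e., r_k = p_k^{−σ} for some fixed σ ≥ 0. -/

import Mathlib

/-- `τ(n) = ∑ₖ nₖ · log pₖ`, where `pₖ` is the `k`-th prime. -/
noncomputable def tau (n : ℕ →₀ ℤ) : ℝ :=
  n.sum fun k m => (m : ℝ) * Real.log (Nat.nth Nat.Prime k)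

lemma nth_prime_zero' : Nat.nth Nat.Prime 0 = 2 := by
  have h := Nat.nth_count (p := Nat.Prime) (n := 2) (by norm_num)
  have h0 : Nat.count Nat.Prime 2 = 0 := by decide
  rwa [h0] at h

lemma log_nth_prime_pos (k : ℕ) : 0 < Real.log (Nat.nth Nat.Prime k) := by
  have hp := Nat.prime_nth_prime k
  have h2 : 2 ≤ Nat.nth Nat.Prime k := hp.two_le
  apply Real.log_pos
  exact_mod_cast lt_of_lt_of_le one_lt_two (by exact_mod_cast h2)

lemma tau_add (a b : ℕ →₀ ℤ) : tau (a + b) = tau a + tau b := by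
  unfold tau
  apply Finsupp.sum_add_index' (fun i => by simp) (fun i m1 m2 => by push_cast; ring)

lemma tau_single (j : ℕ) (c : ℤ) :
    tau (Finsupp.single j c) = (c : ℝ) * Real.log (Nat.nth Nat.Prime j) := by
  unfold tau
  exact Finsupp.sum_single_index (by simp)

/-- the log-size `S(n) = ∑ₖ nₖ log rₖ`. -/
noncomputable def Sz (r : ℕ → ℝ) (n : ℕ →₀ ℤ) : ℝ :=
  n.sum fun k m => (m : ℝ) * Real.log (r k)

lemma Sz_add (r : ℕ → ℝ) (a b : ℕ →₀ ℤ) : Sz r (a + b) = Sz r a + Sz r b := by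
  unfold Sz
  apply Finsupp.sum_add_index' (fun i => by simp) (fun i m1 m2 => by push_cast; ring)

lemma Sz_single (r : ℕ → ℝ) (j : ℕ) (c : ℤ) :
    Sz r (Finsupp.single j c) = (c : ℝ) * Real.log (r j) := by
  unfold Sz
  exact Finsupp.sum_single_index (by simp)

lemma abs_prod_eq (lam : ℕ → Circle) (r : ℕ → ℝ) (hr : ∀ k, 0 < r k) (n : ℕ →₀ ℤ) :
    ‖(∏ k ∈ n.support, ((r k : ℂ) * (lam k : ℂ)) ^ (n k))‖ =
      Real.exp (Sz r n) := by
  rw [norm_prod, Sz, Finsupp.sum, Real.exp_sum]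
  refine Finset.prod_congr rfl fun k _ => ?_
  rw [norm_zpow, norm_mul, Complex.norm_real, Real.norm_eq_abs, Circle.norm_coe, mul_one,
    abs_of_pos (hr k), ← Real.rpow_intCast, Real.rpow_def_of_pos (hr k), mul_comm]

/-- For `λ ∈ 𝕋^ω` and a sequence `r` of positive reals with `r₁ ≤ 1`, the family
`(rλ)^n` over `n ∈ ℤ^∞` with `τ(n) ≥ 0` is bounded iff `log rₖ / log pₖ = log r₁ / log 2`
for all `k` (indices are 0-based: `r 0` is `r₁`, `Nat.nth Nat.Prime 0 = 2`). -/
theorem bounded_powers_iff (lam : ℕ → Circle) (r : ℕ → ℝ)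
    (hr : ∀ k, 0 < r k) (hr1 : r 0 ≤ 1) :
    (∃ C : ℝ, ∀ n : ℕ →₀ ℤ, 0 ≤ tau n →
        ‖(∏ k ∈ n.support, ((r k : ℂ) * (lam k : ℂ)) ^ (n k))‖ ≤ C) ↔
      (∀ k, Real.log (r k) / Real.log (Nat.nth Nat.Prime k) = Real.log (r 0) / Real.log 2) := by
  have hl2 : Real.log (Nat.nth Nat.Prime 0) = Real.log 2 := by rw [nth_prime_zero']; norm_num
  constructor
  · rintro ⟨C, hC⟩ k
    rcases eq_or_ne k 0 with rfl | hk0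
    · rw [hl2]
    · by_contra hne
      set ℓk := Real.log (Nat.nth Nat.Prime k) with hℓk
      set ℓ0 := Real.log (Nat.nth Nat.Prime 0) with hℓ0
      have hℓkpos : 0 < ℓk := log_nth_prime_pos k
      have hℓ0pos : 0 < ℓ0 := log_nth_prime_pos 0
      set Lk := Real.log (r k) with hLk
      set L0 := Real.log (r 0) with hL0
      set D := Lk * ℓ0 - L0 * ℓk with hD
      have hDne : D ≠ 0 := by
        intro h
        apply hne
        rw [← hl2, div_eq_div_iff hℓkpos.ne' hℓ0pos.ne']
        linarith [sub_eq_zero.mp h]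
      set C' := max C 1 with hC'
      have hC'pos : 0 < C' := lt_of_lt_of_le one_pos (le_max_right _ _)
      -- choose sign
      set s : ℤ := if 0 < D then 1 else -1 with hs
      have hsD : (s : ℝ) * D = |D| := by
        rcases lt_or_ge 0 D with h | h
        · simp [hs, h, abs_of_pos h]
        · have : ¬ (0 < D) := not_lt.mpr h
          simp [hs, this, abs_of_nonpos h]
      have hDabs : 0 < |D| := abs_pos.mpr hDne
      -- choose m large
      obtain ⟨m, hm⟩ := exists_nat_gt (ℓ0 * (Real.log C' + |L0| + 1) / |D|)
      set x : ℝ := (s * m : ℤ) * ℓk / ℓ0 with hx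
      set n : ℕ →₀ ℤ := Finsupp.single k (s * m) + Finsupp.single 0 (-⌊x⌋) with hn
      have htau : tau n = ℓ0 * (x - ⌊x⌋) := by
        rw [hn, tau_add, tau_single, tau_single, ← hℓk, ← hℓ0, hx]
        push_cast
        field_simp
        ring
      have htau0 : 0 ≤ tau n := by
        rw [htau]
        have := Int.fract_nonneg x
        rw [Int.fract] at this
        positivity
      have hSz : Sz r n = (s * m : ℤ) * D / ℓ0 + (x - ⌊x⌋) * L0 := by
        rw [hn, Sz_add, Sz_single, Sz_single, ← hLk, ← hL0, hx, hD]
        push_cast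
        field_simp
        ring
      have hfr0 : 0 ≤ x - ⌊x⌋ := by have := Int.fract_nonneg x; rwa [Int.fract] at this
      have hfr1 : x - ⌊x⌋ < 1 := by have := Int.fract_lt_one x; rwa [Int.fract] at this
      have hSlb : (m : ℝ) * |D| / ℓ0 - |L0| ≤ Sz r n := by
        rw [hSz]
        have h1 : ((s * m : ℤ) : ℝ) * D = (m : ℝ) * |D| := by
          push_cast; rw [mul_comm (s:ℝ) (m:ℝ), mul_assoc, hsD]
        rw [h1]
        have h2 : -(|L0|) ≤ (x - ⌊x⌋) * L0 := by
          rcases le_or_gt 0 L0 with h | h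
          · nlinarith [abs_nonneg L0]
          · nlinarith [neg_abs_le L0, abs_of_neg h]
        linarith
      have hub : Sz r n ≤ Real.log C' := by
        have h1 := hC n htau0
        rw [abs_prod_eq lam r hr] at h1
        have h2 : Real.exp (Sz r n) ≤ C' := le_trans h1 (le_max_left _ _)
        calc Sz r n = Real.log (Real.exp (Sz r n)) := (Real.log_exp _).symm
          _ ≤ Real.log C' := Real.log_le_log (Real.exp_pos _) h2
      -- contradiction
      have hmlb : Real.log C' + |L0| + 1 ≤ (m : ℝ) * |D| / ℓ0 := by
        rw [div_lt_iff₀ hDabs] at hm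
        rw [le_div_iff₀ hℓ0pos]
        nlinarith
      linarith
  · intro h
    refine ⟨1, fun n hn => ?_⟩
    rw [abs_prod_eq lam r hr]
    have key : Sz r n = (Real.log (r 0) / Real.log 2) * tau n := by
      rw [Sz, tau, Finsupp.mul_sum]
      refine Finsupp.sum_congr fun k _ => ?_
      have hk := h k
      have hℓ := (log_nth_prime_pos k).ne'
      rw [div_eq_div_iff hℓ (by rw [← hl2]; exact (log_nth_prime_pos 0).ne')] at hk
      field_simp
      linear_combination ((n k : ℝ)) * hk
    have hσ : Real.log (r 0) / Real.log 2 ≤ 0 := by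
      apply div_nonpos_of_nonpos_of_nonneg
      · exact Real.log_nonpos (le_of_lt (hr 0)) hr1
      · exact Real.log_nonneg one_le_two
    have : Sz r n ≤ 0 := by
      rw [key]
      exact mul_nonpos_of_nonpos_of_nonneg hσ hn
    calc Real.exp (Sz r n) ≤ Real.exp 0 := Real.exp_le_exp.mpr this
      _ = 1 := Real.exp_zero
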